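/- If the capacitated graph G(H) associated with a 3-hypergraph H admits a sub-5-MCNZF, then H is 2-colorable. -/

import Mathlib

open Finset


open Finset

/-- A finite multigraph given with a reference orientation: each edge `e` goes
from `src e` to `tgt e`.  An orientation of the graph is a sign function
`σ : E → ℤˣ` telling, for each edge, whether it keeps (`1`) or reverses (`-1`)
its reference direction. -/
structure Multigraph where
  V : Type
  E : Type
  [fintV : Fintype V]
  [fintE : Fintype E]
  [decV : DecidableEq V]
  [decE : DecidableEq E]
  src : E → V
  tgt : E → V

attribute [instance] Multigraph.fintV Multigraph.fintE Multigraph.decV Multigraph.decE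

/-- `f` is a flow with respect to the reference orientation: at every vertex the
sum over outgoing edges equals the sum over incoming edges. -/
def Multigraph.IsFlow (G : Multigraph) {M : Type*} [AddCommMonoid M] (f : G.E → M) : Prop :=
  ∀ v : G.V,
    ∑ e ∈ Finset.univ.filter (fun e => G.src e = v), f e =
    ∑ e ∈ Finset.univ.filter (fun e => G.tgt e = v), f e

/-- `f` is a flow on the orientation `σ` of `G` (values of `f` are read in the
direction given by `σ`). -/
def Multigraph.IsFlowOn (G : Multigraph) {M : Type*} [AddCommGroup M]
    (σ : G.E → ℤˣ) (f : G.E → M) : Prop :=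
  G.IsFlow (fun e => ((σ e : ℤ) • f e))

/-- The open interval `(a,b)` of `ℝ/rℤ`: the points traversed strictly clockwise
from `a` to `b`, with the convention `(a,a) = ℝ/rℤ \ {a}`. -/
noncomputable def openArc (r a b : ℝ) : Set (AddCircle r) :=
  (fun t : ℝ => (t : AddCircle r)) '' Set.Ioo a (a + (r - Int.fract ((a - b) / r) * r))

/-- The closed interval `[a,b]` of `ℝ/rℤ`: the points traversed clockwise from
`a` to `b`, endpoints included, with the convention `[a,a] = {a}`. -/
noncomputable def closedArc (r a b : ℝ) : Set (AddCircle r) :=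
  (fun t : ℝ => (t : AddCircle r)) '' Set.Icc a (a + Int.fract ((b - a) / r) * r)

/-- `G` has a circular nowhere-zero `r`-flow: an orientation together with a
real-valued flow all of whose values lie in `[1, r-1]`. -/
def Multigraph.HasCNZF (G : Multigraph) (r : ℝ) : Prop :=
  ∃ (σ : G.E → ℤˣ) (f : G.E → ℝ), G.IsFlowOn σ f ∧ ∀ e, f e ∈ Set.Icc (1:ℝ) (r - 1)

/-- The circular flow number of `G`, as an extended real (`⊤` if `G` admits no
circular nowhere-zero `r`-flow for any `r`, e.g. if `G` has a bridge). -/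
noncomputable def circFlowNumber (G : Multigraph) : EReal :=
  sInf {x : EReal | ∃ r : ℝ, x = (r : EReal) ∧ G.HasCNZF r}

/-- The graph `G ∪ e₀` obtained from `G` by adding one extra edge `e₀ = none`
joining `u` to `v`. -/
def Multigraph.addEdge (G : Multigraph) (u v : G.V) : Multigraph where
  V := G.V
  E := Option G.E
  src := fun e => e.elim u G.src
  tgt := fun e => e.elim v G.tgt

/-- The capacity of the capacitated g-edge `(G, cap)` with terminals `u,v`:
all values `f e₀` of modular flows `f` on `G ∪ e₀` (over all orientations) whose
value on each edge `e` of `G` lies in the prescribed set `cap e`. -/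
def CPcap (r : ℝ) (G : Multigraph) (cap : G.E → Set (AddCircle r)) (u v : G.V) :
    Set (AddCircle r) :=
  {t | ∃ (σ : Option G.E → ℤˣ) (f : Option G.E → AddCircle r),
        (G.addEdge u v).IsFlowOn σ f ∧ (∀ e : G.E, f (some e) ∈ cap e) ∧ f none = t}

/-- The open `r`-capacity `CP_r(G_{u,v})` of the g-edge `G_{u,v}`. -/
noncomputable def CP (r : ℝ) (G : Multigraph) (u v : G.V) : Set (AddCircle r) :=
  CPcap r G (fun _ => openArc r 1 (r - 1)) u v

/-- A capacitated graph `(G, cap)` admits a flow respecting all capacities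
(for `cap e = (1,4) ⊆ ℝ/5ℤ` everywhere this is a sub-5-MCNZF). -/
def HasCapFlow (r : ℝ) (G : Multigraph) (cap : G.E → Set (AddCircle r)) : Prop :=
  ∃ (σ : G.E → ℤˣ) (f : G.E → AddCircle r), G.IsFlowOn σ f ∧ ∀ e, f e ∈ cap e

/-- Deletion of the edge `e₀`. -/
def Multigraph.deleteEdge (G : Multigraph) (e₀ : G.E) : Multigraph where
  V := G.V
  E := {e : G.E // e ≠ e₀}
  src := fun e => G.src e.1
  tgt := fun e => G.tgt e.1

/-- Degree of a vertex (loops count twice). -/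
def Multigraph.degree (G : Multigraph) (v : G.V) : ℕ :=
  (Finset.univ.filter (fun e => G.src e = v)).card +
  (Finset.univ.filter (fun e => G.tgt e = v)).card

/-- The tail of edge `e` in the orientation `σ`. -/
def Multigraph.osrc (G : Multigraph) (σ : G.E → ℤˣ) (e : G.E) : G.V :=
  if σ e = 1 then G.src e else G.tgt e

/-- The head of edge `e` in the orientation `σ`. -/
def Multigraph.otgt (G : Multigraph) (σ : G.E → ℤˣ) (e : G.E) : G.V :=
  if σ e = 1 then G.tgt e else G.src e

section GH

variable {n N : ℕ} (tri : Fin N → Fin 3 → Fin n)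

/-- The occurrences of the node `x`: pairs `(T, i)` such that `x` is the `i`-th
node of the triplet `T`. -/
def occSet (x : Fin n) : Type := {p : Fin N × Fin 3 // tri p.1 p.2 = x}

instance (x : Fin n) : Fintype (occSet tri x) := by unfold occSet; infer_instance
instance (x : Fin n) : DecidableEq (occSet tri x) := by unfold occSet; infer_instance

variable (enum : ∀ x : Fin n, occSet tri x ≃ Fin (Fintype.card (occSet tri x)))

/-- The cyclic successor of an occurrence of `x`, in the cyclic order given by
the enumeration `enum x`. -/
def nxtOcc (x : Fin n) (o : occSet tri x) : occSet tri x :=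
  (enum x).symm ⟨((enum x o : Fin _).1 + 1) % Fintype.card (occSet tri x),
    Nat.mod_lt _ (Fintype.card_pos_iff.mpr ⟨o⟩)⟩

/-- The cyclic order `(T₁⁺, T₂⁺, T₃⁺, T₃⁻, T₂⁻, T₁⁻)` of a triplet-cycle
(`true` = positive, `false` = negative). -/
def cyc6 : Fin 6 → Fin 3 × Bool :=
  ![(0, true), (1, true), (2, true), (2, false), (1, false), (0, false)]

/-- The capacitated graph `G(H)` associated with the 3-hypergraph `H` given by
`tri` (with a chosen cyclic enumeration `enum x` of the occurrences of each node
`x`).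

Vertices: `Sum.inl (o, s)` is the positive (`s = true`) or negative
(`s = false`) terminal of the node-cycle `C(tri o.1 o.2)` associated with the
occurrence `o`; `Sum.inr ((T,i), s)` is the vertex `Tᵢ⁺` (resp. `Tᵢ⁻`) of the
triplet-cycle `C(T)`.

Edges: `Sum.inl (o, true)` joins the two terminals of the occurrence `o`, and
`Sum.inl (o, false)` joins the negative terminal of `o` to the positive
terminal of the next occurrence of the same node, so that the node-cycle
`C(x)` passes through its positive and negative terminals alternately, and has
length twice the number of triplets containing `x`; `Sum.inr (Sum.inl (T,j))`
is the `j`-th edge of the triplet-cycle `C(T)`, in the cyclic order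
`(T₁⁺, T₂⁺, T₃⁺, T₃⁻, T₂⁻, T₁⁻)`; `Sum.inr (Sum.inr (o, s))` is the connector
joining the positive (resp. negative) terminal of the occurrence `o = (T,i)`
to `Tᵢ⁺` (resp. `Tᵢ⁻`). -/
def GH : Multigraph where
  V := ((Fin N × Fin 3) × Bool) ⊕ ((Fin N × Fin 3) × Bool)
  E := ((Fin N × Fin 3) × Bool) ⊕ ((Fin N × Fin 6) ⊕ ((Fin N × Fin 3) × Bool))
  src := fun e =>
    match e with
    | Sum.inl (o, true) => Sum.inl (o, true)
    | Sum.inl (o, false) => Sum.inl (o, false)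
    | Sum.inr (Sum.inl (T, j)) => Sum.inr ((T, (cyc6 j).1), (cyc6 j).2)
    | Sum.inr (Sum.inr (o, s)) => Sum.inl (o, s)
  tgt := fun e =>
    match e with
    | Sum.inl (o, true) => Sum.inl (o, false)
    | Sum.inl (o, false) => Sum.inl ((nxtOcc tri enum (tri o.1 o.2) ⟨o, rfl⟩).1, true)
    | Sum.inr (Sum.inl (T, j)) => Sum.inr ((T, (cyc6 (j + 1)).1), (cyc6 (j + 1)).2)
    | Sum.inr (Sum.inr (o, s)) => Sum.inr (o, s)

/-- The capacities of `G(H)`: node-cycle edges and connectors get capacity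
`(1,2) ∪ (3,4)`, triplet-cycle edges get capacity `(1,4)`. -/
noncomputable def GHcap : (GH tri enum).E → Set (AddCircle (5:ℝ)) := fun e =>
  match e with
  | Sum.inl _ => openArc 5 1 2 ∪ openArc 5 3 4
  | Sum.inr (Sum.inl _) => openArc 5 1 4
  | Sum.inr (Sum.inr _) => openArc 5 1 2 ∪ openArc 5 3 4

/-- The 3-hypergraph given by `tri` is 2-colorable: the nodes can be 2-colored
so that no triplet is monochromatic. -/
def TwoColorable : Prop :=
  ∃ c : Fin n → Bool, ∀ T : Fin N,
    (∃ i : Fin 3, c (tri T i) = true) ∧ (∃ i : Fin 3, c (tri T i) = false)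

end GH

section RealAux

/-- `S = (1,2) ∪ (3,4)` as a set of reals. -/
def Sset : Set ℝ := Set.Ioo 1 2 ∪ Set.Ioo 3 4

lemma Sset_sub {a : ℝ} (ha : a ∈ Sset) : 1 < a ∧ a < 4 := by
  rcases ha with ha | ha <;> simp only [Set.mem_Ioo] at ha <;> constructor <;> linarith

lemma keyS {a b c : ℝ} (ha : a ∈ Sset) (hb : b ∈ Sset) (hc : c ∈ Sset)
    (h : ∃ k : ℤ, c = a + b + 5 * k) :
    (a < 2 ↔ b < 2) ∧ (a < 2 ↔ ¬ (c < 2)) := by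
  obtain ⟨k, hk⟩ := h
  obtain ⟨ha1, ha2⟩ := Sset_sub ha
  obtain ⟨hb1, hb2⟩ := Sset_sub hb
  obtain ⟨hc1, hc2⟩ := Sset_sub hc
  have hk0 : k = 0 ∨ k = -1 := by
    have h1 : (-2 : ℝ) < (k : ℝ) := by nlinarith
    have h2 : (k : ℝ) < 1 := by nlinarith
    have h1' : (-2 : ℤ) < k := by exact_mod_cast h1
    have h2' : k < 1 := by exact_mod_cast h2
    omega
  rcases hk0 with rfl | rfl <;>
    rcases ha with ha | ha <;> rcases hb with hb | hb <;> rcases hc with hc | hc <;>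
      simp only [Set.mem_Ioo] at * <;> push_cast at hk <;>
        constructor <;> constructor <;> intro h1 <;> (try push_neg at h1) <;>
          (try intro h2) <;> linarith

lemma keyA {x y u : ℝ} (hx : x ∈ Set.Ioo (1:ℝ) 4) (hy : y ∈ Set.Ioo (1:ℝ) 4)
    (hu : u ∈ Sset) (hu2 : u < 2) (h : ∃ k : ℤ, y = x + u + 5 * k) : y = x + u := by
  obtain ⟨k, hk⟩ := h
  obtain ⟨hu1, _⟩ := Sset_sub hu
  simp only [Set.mem_Ioo] at hx hy
  have hk0 : k = 0 := by
    have h1 : (-1 : ℝ) < (k : ℝ) := by nlinarith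
    have h2 : (k : ℝ) < 1 := by nlinarith
    have h1' : (-1 : ℤ) < k := by exact_mod_cast h1
    have h2' : k < 1 := by exact_mod_cast h2
    omega
  subst hk0; push_cast at hk; linarith

lemma arc12 : openArc 5 1 2 = (fun t : ℝ => (t : AddCircle (5:ℝ))) '' Set.Ioo 1 2 := by
  unfold openArc; norm_num [Int.fract]

lemma arc34 : openArc 5 3 4 = (fun t : ℝ => (t : AddCircle (5:ℝ))) '' Set.Ioo 3 4 := by
  unfold openArc; norm_num [Int.fract]

lemma arc14 : openArc 5 1 4 = (fun t : ℝ => (t : AddCircle (5:ℝ))) '' Set.Ioo 1 4 := by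
  unfold openArc; norm_num [Int.fract]

lemma coe5 {a b : ℝ} (h : (a : AddCircle (5:ℝ)) = b) : ∃ k : ℤ, b = a + 5 * k := by
  have h2 : ((b - a : ℝ) : AddCircle (5:ℝ)) = 0 := by
    rw [AddCircle.coe_sub, h, sub_self]
  obtain ⟨k, hk⟩ := (AddCircle.coe_eq_zero_iff _).mp h2
  exact ⟨k, by push_cast [zsmul_eq_mul] at hk; linarith⟩

lemma coe5_neg (u : ℝ) : ((5 - u : ℝ) : AddCircle (5:ℝ)) = -(u : AddCircle (5:ℝ)) := by
  rw [AddCircle.coe_sub, AddCircle.coe_period, zero_sub]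

end RealAux

section FlowAux

lemma flow_at (G : Multigraph) {M : Type*} [AddCommGroup M] (g : G.E → M)
    (h : G.IsFlow g) (v : G.V) (edges : Finset G.E)
    (hcover : ∀ e, G.src e = v ∨ G.tgt e = v → e ∈ edges) :
    ∑ e ∈ edges, ((if G.src e = v then g e else 0) - (if G.tgt e = v then g e else 0)) = 0 := by
  have h1 := h v
  have h2 : ∑ e : G.E, ((if G.src e = v then g e else 0) - (if G.tgt e = v then g e else 0)) = 0 := by
    rw [Finset.sum_sub_distrib, ← Finset.sum_filter, ← Finset.sum_filter, h1, sub_self]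
  refine (Finset.sum_subset (Finset.subset_univ edges) ?_).trans h2
  intro e _ he
  have h3 : ¬ (G.src e = v ∨ G.tgt e = v) := fun hc => he (hcover e hc)
  push_neg at h3
  rw [if_neg h3.1, if_neg h3.2, sub_self]

lemma sum3 {α M : Type*} [DecidableEq α] [AddCommGroup M] (f : α → M) (a b c : α)
    (h : ∑ x ∈ ({a, b, c} : Finset α), f x = 0)
    (hab : a ≠ b) (hac : a ≠ c) (hbc : b ≠ c) :
    f a + f b + f c = 0 := by
  rwa [Finset.sum_insert (by simp [hab, hac]), Finset.sum_insert (by simp [hbc]),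
    Finset.sum_singleton, ← add_assoc] at h

end FlowAux

section GHAux

variable {n N : ℕ} (tri : Fin N → Fin 3 → Fin n)
variable (enum : ∀ x : Fin n, occSet tri x ≃ Fin (Fintype.card (occSet tri x)))

/-- The cyclic predecessor of an occurrence. -/
def prvOcc (x : Fin n) (o : occSet tri x) : occSet tri x :=
  (enum x).symm ⟨((enum x o : Fin _).1 + (Fintype.card (occSet tri x) - 1)) %
      Fintype.card (occSet tri x),
    Nat.mod_lt _ (Fintype.card_pos_iff.mpr ⟨o⟩)⟩

lemma nxt_prv (x : Fin n) (q : occSet tri x) :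
    nxtOcc tri enum x (prvOcc tri enum x q) = q := by
  have hm : 0 < Fintype.card (occSet tri x) := Fintype.card_pos_iff.mpr ⟨q⟩
  unfold nxtOcc prvOcc
  simp only [Equiv.apply_symm_apply]
  have hval : (((enum x q : Fin _).1 + (Fintype.card (occSet tri x) - 1)) %
      Fintype.card (occSet tri x) + 1) % Fintype.card (occSet tri x) = (enum x q : Fin _).1 := by
    rw [Nat.mod_add_mod,
      show (enum x q : Fin _).1 + (Fintype.card (occSet tri x) - 1) + 1
        = (enum x q : Fin _).1 + Fintype.card (occSet tri x) by omega,
      Nat.add_mod_right, Nat.mod_eq_of_lt (enum x q).2]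
  rw [show (⟨_, _⟩ : Fin (Fintype.card (occSet tri x))) = enum x q from Fin.ext hval]
  exact (enum x).symm_apply_apply _

lemma prv_nxt (x : Fin n) (q : occSet tri x) :
    prvOcc tri enum x (nxtOcc tri enum x q) = q := by
  have hm : 0 < Fintype.card (occSet tri x) := Fintype.card_pos_iff.mpr ⟨q⟩
  unfold nxtOcc prvOcc
  simp only [Equiv.apply_symm_apply]
  have hval : (((enum x q : Fin _).1 + 1) % Fintype.card (occSet tri x) +
      (Fintype.card (occSet tri x) - 1)) % Fintype.card (occSet tri x)
        = (enum x q : Fin _).1 := by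
    rw [Nat.mod_add_mod,
      show (enum x q : Fin _).1 + 1 + (Fintype.card (occSet tri x) - 1)
        = (enum x q : Fin _).1 + Fintype.card (occSet tri x) by omega,
      Nat.add_mod_right, Nat.mod_eq_of_lt (enum x q).2]
  rw [show (⟨_, _⟩ : Fin (Fintype.card (occSet tri x))) = enum x q from Fin.ext hval]
  exact (enum x).symm_apply_apply _

lemma nxt_cast (o : Fin N × Fin 3) (x : Fin n) (hx : tri o.1 o.2 = x) :
    (nxtOcc tri enum (tri o.1 o.2) ⟨o, rfl⟩).1 = (nxtOcc tri enum x ⟨o, hx⟩).1 := by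
  subst hx; rfl

lemma prv_cast (o : Fin N × Fin 3) (x : Fin n) (hx : tri o.1 o.2 = x) :
    (prvOcc tri enum (tri o.1 o.2) ⟨o, rfl⟩).1 = (prvOcc tri enum x ⟨o, hx⟩).1 := by
  subst hx; rfl

lemma prv_eq (o o' : Fin N × Fin 3)
    (h : (nxtOcc tri enum (tri o'.1 o'.2) ⟨o', rfl⟩).1 = o) :
    o' = (prvOcc tri enum (tri o.1 o.2) ⟨o, rfl⟩).1 := by
  have hx : tri o.1 o.2 = tri o'.1 o'.2 := by
    have h2 := (nxtOcc tri enum (tri o'.1 o'.2) ⟨o', rfl⟩).2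
    rw [h] at h2; exact h2
  rw [prv_cast tri enum o (tri o'.1 o'.2) hx]
  have h3 : (⟨o, hx⟩ : occSet tri (tri o'.1 o'.2))
      = nxtOcc tri enum (tri o'.1 o'.2) ⟨o', rfl⟩ := Subtype.ext h.symm
  rw [h3]
  exact (congrArg Subtype.val (prv_nxt tri enum (tri o'.1 o'.2) ⟨o', rfl⟩)).symm

lemma eqP (g : (GH tri enum).E → AddCircle (5:ℝ)) (hg : (GH tri enum).IsFlow g)
    (o : Fin N × Fin 3) :
    g (Sum.inl (o, true)) + g (Sum.inr (Sum.inr (o, true)))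
      = g (Sum.inl ((prvOcc tri enum (tri o.1 o.2) ⟨o, rfl⟩).1, false)) := by
  have hpf : tri ((prvOcc tri enum (tri o.1 o.2) ⟨o, rfl⟩).1).1
      ((prvOcc tri enum (tri o.1 o.2) ⟨o, rfl⟩).1).2 = tri o.1 o.2 :=
    (prvOcc tri enum (tri o.1 o.2) ⟨o, rfl⟩).2
  have hnp : (nxtOcc tri enum
      (tri ((prvOcc tri enum (tri o.1 o.2) ⟨o, rfl⟩).1).1
        ((prvOcc tri enum (tri o.1 o.2) ⟨o, rfl⟩).1).2)
      ⟨(prvOcc tri enum (tri o.1 o.2) ⟨o, rfl⟩).1, rfl⟩).1 = o := by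
    rw [nxt_cast tri enum _ (tri o.1 o.2) hpf]
    rw [show (⟨(prvOcc tri enum (tri o.1 o.2) ⟨o, rfl⟩).1, hpf⟩ : occSet tri (tri o.1 o.2))
        = prvOcc tri enum (tri o.1 o.2) ⟨o, rfl⟩ from Subtype.ext rfl]
    exact congrArg Subtype.val (nxt_prv tri enum (tri o.1 o.2) ⟨o, rfl⟩)
  have h := flow_at (GH tri enum) g hg (Sum.inl (o, true))
      {Sum.inl (o, true), Sum.inr (Sum.inr (o, true)),
        Sum.inl ((prvOcc tri enum (tri o.1 o.2) ⟨o, rfl⟩).1, false)}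
      (by
        rintro (⟨o', b⟩ | (⟨T', j⟩ | ⟨o', s'⟩)) he
        · cases b
          · -- node edge (o', false)
            simp only [GH] at he
            rcases he with he | he
            · exact absurd he (by simp)
            · simp only [Sum.inl.injEq, Prod.mk.injEq, and_true] at he
              have h4 := prv_eq tri enum o o' he
              subst h4; exact Finset.mem_insert_of_mem (Finset.mem_insert_of_mem (Finset.mem_singleton_self _))
          · -- node edge (o', true)
            simp only [GH] at he
            rcases he with he | he
            · simp only [Sum.inl.injEq, Prod.mk.injEq, and_true] at he
              subst he; exact Finset.mem_insert_self _ _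
            · exact absurd he (by simp)
        · -- triplet edge
          simp only [GH] at he
          rcases he with he | he <;> exact absurd he (by simp)
        · -- connector
          simp only [GH] at he
          rcases he with he | he
          · simp only [Sum.inl.injEq, Prod.mk.injEq] at he
            obtain ⟨rfl, rfl⟩ := he; exact Finset.mem_insert_of_mem (Finset.mem_insert_self _ _)
          · exact absurd he (by simp))
  have ne1 : (Sum.inl (o, true) : (GH tri enum).E) ≠ Sum.inr (Sum.inr (o, true)) := by simp
  have ne2 : (Sum.inl (o, true) : (GH tri enum).E)
      ≠ Sum.inl ((prvOcc tri enum (tri o.1 o.2) ⟨o, rfl⟩).1, false) := by simp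
  have ne3 : (Sum.inr (Sum.inr (o, true)) : (GH tri enum).E)
      ≠ Sum.inl ((prvOcc tri enum (tri o.1 o.2) ⟨o, rfl⟩).1, false) := by simp
  replace h := sum3 _ _ _ _ h ne1 ne2 ne3
  simp only [GH, hnp] at h
  simp only [reduceCtorEq, Sum.inl.injEq, Sum.inr.injEq, Prod.mk.injEq, eq_self_iff_true,
    Bool.false_eq_true, Bool.true_eq_false, and_false, false_and, and_true, true_and,
    ↓reduceIte] at h
  rw [← sub_eq_zero, ← h]
  abel

lemma eqN (g : (GH tri enum).E → AddCircle (5:ℝ)) (hg : (GH tri enum).IsFlow g)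
    (o : Fin N × Fin 3) :
    g (Sum.inl (o, false)) + g (Sum.inr (Sum.inr (o, false))) = g (Sum.inl (o, true)) := by
  have h := flow_at (GH tri enum) g hg (Sum.inl (o, false))
      {Sum.inl (o, false), Sum.inr (Sum.inr (o, false)), Sum.inl (o, true)}
      (by
        rintro (⟨o', b⟩ | (⟨T', j⟩ | ⟨o', s'⟩)) he
        · cases b
          · simp only [GH] at he
            rcases he with he | he
            · simp only [Sum.inl.injEq, Prod.mk.injEq, and_true] at he
              subst he; exact Finset.mem_insert_self _ _
            · exact absurd he (by simp)
          · simp only [GH] at he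
            rcases he with he | he
            · exact absurd he (by simp)
            · simp only [Sum.inl.injEq, Prod.mk.injEq, and_true] at he
              subst he; exact Finset.mem_insert_of_mem (Finset.mem_insert_of_mem (Finset.mem_singleton_self _))
        · simp only [GH] at he
          rcases he with he | he <;> exact absurd he (by simp)
        · simp only [GH] at he
          rcases he with he | he
          · simp only [Sum.inl.injEq, Prod.mk.injEq] at he
            obtain ⟨rfl, rfl⟩ := he; exact Finset.mem_insert_of_mem (Finset.mem_insert_self _ _)
          · exact absurd he (by simp))
  have ne1 : (Sum.inl (o, false) : (GH tri enum).E) ≠ Sum.inr (Sum.inr (o, false)) := by simp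
  have ne2 : (Sum.inl (o, false) : (GH tri enum).E) ≠ Sum.inl (o, true) := by simp
  have ne3 : (Sum.inr (Sum.inr (o, false)) : (GH tri enum).E) ≠ Sum.inl (o, true) := by simp
  replace h := sum3 _ _ _ _ h ne1 ne2 ne3
  simp only [GH] at h
  simp only [reduceCtorEq, Sum.inl.injEq, Sum.inr.injEq, Prod.mk.injEq, eq_self_iff_true,
    Bool.false_eq_true, Bool.true_eq_false, and_false, false_and, and_true, true_and,
    ↓reduceIte] at h
  rw [← sub_eq_zero, ← h]
  abel

lemma eqT (g : (GH tri enum).E → AddCircle (5:ℝ)) (hg : (GH tri enum).IsFlow g)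
    (T : Fin N) (k : Fin 6) :
    g (Sum.inr (Sum.inl (T, k))) = g (Sum.inr (Sum.inl (T, k - 1)))
      + g (Sum.inr (Sum.inr ((T, (cyc6 k).1), (cyc6 k).2))) := by
  have d1 : ∀ j k : Fin 6, (cyc6 j).1 = (cyc6 k).1 → (cyc6 j).2 = (cyc6 k).2 → j = k := by
    decide
  have d2 : ∀ j k : Fin 6, (cyc6 (j+1)).1 = (cyc6 k).1 → (cyc6 (j+1)).2 = (cyc6 k).2 →
      j = k - 1 := by decide
  have d3 : ∀ k : Fin 6, ¬((cyc6 (k+1)).1 = (cyc6 k).1 ∧ (cyc6 (k+1)).2 = (cyc6 k).2) := by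
    decide
  have d4 : ∀ k : Fin 6, ¬((cyc6 (k-1)).1 = (cyc6 k).1 ∧ (cyc6 (k-1)).2 = (cyc6 k).2) := by
    decide
  have d5 : ∀ k : Fin 6, k - 1 + 1 = k := by decide
  have d6 : ∀ k : Fin 6, ¬ k = k - 1 := by decide
  have h := flow_at (GH tri enum) g hg (Sum.inr ((T, (cyc6 k).1), (cyc6 k).2))
      {Sum.inr (Sum.inl (T, k)), Sum.inr (Sum.inl (T, k - 1)),
        Sum.inr (Sum.inr ((T, (cyc6 k).1), (cyc6 k).2))}
      (by
        rintro (⟨o', b⟩ | (⟨T', j⟩ | ⟨o', s'⟩)) he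
        · cases b <;>
            (simp only [GH] at he
             rcases he with he | he <;> exact absurd he (by simp))
        · simp only [GH] at he
          rcases he with he | he
          · simp only [Sum.inr.injEq, Prod.mk.injEq] at he
            obtain ⟨⟨hT, hi⟩, hs⟩ := he
            have := d1 j k hi hs
            subst hT this; exact Finset.mem_insert_self _ _
          · simp only [Sum.inr.injEq, Prod.mk.injEq] at he
            obtain ⟨⟨hT, hi⟩, hs⟩ := he
            have := d2 j k hi hs
            subst hT this; exact Finset.mem_insert_of_mem (Finset.mem_insert_self _ _)
        · simp only [GH] at he
          rcases he with he | he
          · exact absurd he (by simp)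
          · simp only [Sum.inr.injEq, Prod.mk.injEq] at he
            obtain ⟨rfl, rfl⟩ := he; exact Finset.mem_insert_of_mem (Finset.mem_insert_of_mem (Finset.mem_singleton_self _)))
  have ne1 : (Sum.inr (Sum.inl (T, k)) : (GH tri enum).E)
      ≠ Sum.inr (Sum.inl (T, k - 1)) := by simp [d6 k]
  have ne2 : (Sum.inr (Sum.inl (T, k)) : (GH tri enum).E)
      ≠ Sum.inr (Sum.inr ((T, (cyc6 k).1), (cyc6 k).2)) := by simp
  have ne3 : (Sum.inr (Sum.inl (T, k - 1)) : (GH tri enum).E)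
      ≠ Sum.inr (Sum.inr ((T, (cyc6 k).1), (cyc6 k).2)) := by simp
  replace h := sum3 _ _ _ _ h ne1 ne2 ne3
  simp only [GH, d5 k] at h
  simp only [reduceCtorEq, Sum.inl.injEq, Sum.inr.injEq, Prod.mk.injEq, eq_self_iff_true,
    Bool.false_eq_true, Bool.true_eq_false, and_false, false_and, and_true, true_and,
    ↓reduceIte, d3 k, d4 k] at h
  rw [← sub_eq_zero, ← h]
  abel

/-- Real-valued capacities: where the representatives must live. -/
def capR : (GH tri enum).E → Set ℝ := fun e =>
  match e with
  | Sum.inl _ => Sset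
  | Sum.inr (Sum.inl _) => Set.Ioo 1 4
  | Sum.inr (Sum.inr _) => Sset

end GHAux
/-- If the capacitated graph `G(H)` associated with a
3-hypergraph `H` (with node set `Fin n`, triplets indexed by `Fin N` via
`tri`, each triplet consisting of three distinct nodes) admits a sub-5-MCNZF,
then `H` is 2-colorable. -/
theorem flow_implies_twoColorable {n N : ℕ} (tri : Fin N → Fin 3 → Fin n)
    (htri : ∀ T : Fin N, Function.Injective (tri T))
    (enum : ∀ x : Fin n, occSet tri x ≃ Fin (Fintype.card (occSet tri x))) :
    HasCapFlow 5 (GH tri enum) (GHcap tri enum) → TwoColorable tri := by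
  rintro ⟨σ, f, hflow, hcap⟩
  classical
  set g : (GH tri enum).E → AddCircle (5:ℝ) := fun e => (σ e : ℤ) • f e with hgdef
  have hg : (GH tri enum).IsFlow g := hflow
  -- real representatives of the flow values
  have hex : ∀ e : (GH tri enum).E, ∃ u : ℝ,
      (u : AddCircle (5:ℝ)) = g e ∧ u ∈ capR tri enum e := by
    intro e
    have hc := hcap e
    have hge : g e = f e ∨ g e = - f e := by
      rcases Int.units_eq_one_or (σ e) with hσ | hσ
      · left; simp [hgdef, hσ]
      · right; simp [hgdef, hσ]
    rcases e with a | (b | c)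
    · rw [show GHcap tri enum (Sum.inl a) = openArc 5 1 2 ∪ openArc 5 3 4 from rfl,
        arc12, arc34] at hc
      rcases hge with hge | hge
      · rcases hc with ⟨u, hu, hue⟩ | ⟨u, hu, hue⟩
        · exact ⟨u, by rw [hge]; exact hue, Or.inl hu⟩
        · exact ⟨u, by rw [hge]; exact hue, Or.inr hu⟩
      · rcases hc with ⟨u, hu, hue⟩ | ⟨u, hu, hue⟩
        · refine ⟨5 - u, by rw [hge, ← hue]; exact coe5_neg u, Or.inr ?_⟩
          simp only [Set.mem_Ioo] at hu ⊢
          constructor <;> linarith [hu.1, hu.2]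
        · refine ⟨5 - u, by rw [hge, ← hue]; exact coe5_neg u, Or.inl ?_⟩
          simp only [Set.mem_Ioo] at hu ⊢
          constructor <;> linarith [hu.1, hu.2]
    · rw [show GHcap tri enum (Sum.inr (Sum.inl b)) = openArc 5 1 4 from rfl, arc14] at hc
      obtain ⟨u, hu, hue⟩ := hc
      rcases hge with hge | hge
      · exact ⟨u, by rw [hge]; exact hue, hu⟩
      · refine ⟨5 - u, by rw [hge, ← hue]; exact coe5_neg u, ?_⟩
        show 5 - u ∈ Set.Ioo (1:ℝ) 4
        simp only [Set.mem_Ioo] at hu ⊢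
        constructor <;> linarith [hu.1, hu.2]
    · rw [show GHcap tri enum (Sum.inr (Sum.inr c)) = openArc 5 1 2 ∪ openArc 5 3 4 from rfl,
        arc12, arc34] at hc
      rcases hge with hge | hge
      · rcases hc with ⟨u, hu, hue⟩ | ⟨u, hu, hue⟩
        · exact ⟨u, by rw [hge]; exact hue, Or.inl hu⟩
        · exact ⟨u, by rw [hge]; exact hue, Or.inr hu⟩
      · rcases hc with ⟨u, hu, hue⟩ | ⟨u, hu, hue⟩
        · refine ⟨5 - u, by rw [hge, ← hue]; exact coe5_neg u, Or.inr ?_⟩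
          simp only [Set.mem_Ioo] at hu ⊢
          constructor <;> linarith [hu.1, hu.2]
        · refine ⟨5 - u, by rw [hge, ← hue]; exact coe5_neg u, Or.inl ?_⟩
          simp only [Set.mem_Ioo] at hu ⊢
          constructor <;> linarith [hu.1, hu.2]
  choose R hR1 hR2 using hex
  have RS : ∀ os : (Fin N × Fin 3) × Bool, R (Sum.inl os) ∈ Sset := fun os => hR2 (Sum.inl os)
  have RC : ∀ os : (Fin N × Fin 3) × Bool, R (Sum.inr (Sum.inr os)) ∈ Sset :=
    fun os => hR2 (Sum.inr (Sum.inr os))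
  have RTm : ∀ Tj : Fin N × Fin 6, R (Sum.inr (Sum.inl Tj)) ∈ Set.Ioo (1:ℝ) 4 :=
    fun Tj => hR2 (Sum.inr (Sum.inl Tj))
  -- congruence equations for the representatives
  have hPexp : ∀ o : Fin N × Fin 3, ∃ kk : ℤ,
      R (Sum.inl ((prvOcc tri enum (tri o.1 o.2) ⟨o, rfl⟩).1, false))
        = R (Sum.inl (o, true)) + R (Sum.inr (Sum.inr (o, true))) + 5 * kk := by
    intro o
    apply coe5
    rw [AddCircle.coe_add]
    have hh := eqP tri enum g hg o
    exact (congrArg₂ (· + ·) (hR1 _) (hR1 _)).trans (hh.trans (hR1 _).symm)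
  have hNexp : ∀ o : Fin N × Fin 3, ∃ kk : ℤ,
      R (Sum.inl (o, true))
        = R (Sum.inl (o, false)) + R (Sum.inr (Sum.inr (o, false))) + 5 * kk := by
    intro o
    apply coe5
    rw [AddCircle.coe_add]
    have hh := eqN tri enum g hg o
    exact (congrArg₂ (· + ·) (hR1 _) (hR1 _)).trans (hh.trans (hR1 _).symm)
  have hTexp : ∀ (T : Fin N) (k : Fin 6), ∃ kk : ℤ,
      R (Sum.inr (Sum.inl (T, k)))
        = R (Sum.inr (Sum.inl (T, k - 1)))
          + R (Sum.inr (Sum.inr ((T, (cyc6 k).1), (cyc6 k).2))) + 5 * kk := by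
    intro T k
    apply coe5
    rw [AddCircle.coe_add]
    have hh := (eqT tri enum g hg T k).symm
    exact (congrArg₂ (· + ·) (hR1 _) (hR1 _)).trans (hh.trans (hR1 _).symm)
  have hPk : ∀ o : Fin N × Fin 3,
      (R (Sum.inl (o, true)) < 2 ↔ R (Sum.inr (Sum.inr (o, true))) < 2) ∧
      (R (Sum.inl (o, true)) < 2 ↔
        ¬ (R (Sum.inl ((prvOcc tri enum (tri o.1 o.2) ⟨o, rfl⟩).1, false)) < 2)) :=
    fun o => keyS (RS _) (RC _) (RS _) (hPexp o)
  have hNk : ∀ o : Fin N × Fin 3,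
      (R (Sum.inl (o, false)) < 2 ↔ R (Sum.inr (Sum.inr (o, false))) < 2) ∧
      (R (Sum.inl (o, false)) < 2 ↔ ¬ (R (Sum.inl (o, true)) < 2)) :=
    fun o => keyS (RS _) (RC _) (RS _) (hNexp o)
  -- the class is invariant along node cycles
  have hAprv : ∀ o : Fin N × Fin 3,
      (R (Sum.inl (o, true)) < 2 ↔
        R (Sum.inl ((prvOcc tri enum (tri o.1 o.2) ⟨o, rfl⟩).1, true)) < 2) := by
    intro o
    have h1 := (hPk o).2
    have h2 := (hNk ((prvOcc tri enum (tri o.1 o.2) ⟨o, rfl⟩).1)).2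
    tauto
  have hstep : ∀ (x : Fin n) (q : occSet tri x),
      (R (Sum.inl ((nxtOcc tri enum x q).1, true)) < 2 ↔
        R (Sum.inl (q.1, true)) < 2) := by
    intro x q
    have h0 : (nxtOcc tri enum (tri q.1.1 q.1.2) ⟨q.1, rfl⟩).1
        = (nxtOcc tri enum x q).1 := nxt_cast tri enum q.1 x q.2
    have h1 := prv_eq tri enum ((nxtOcc tri enum x q).1) q.1 h0
    have h2 := hAprv ((nxtOcc tri enum x q).1)
    rw [← h1] at h2
    exact h2
  have hconst : ∀ (x : Fin n) (q q' : occSet tri x),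
      (R (Sum.inl (q.1, true)) < 2 ↔ R (Sum.inl (q'.1, true)) < 2) := by
    intro x q q'
    have hm : 0 < Fintype.card (occSet tri x) := Fintype.card_pos_iff.mpr ⟨q⟩
    have main : ∀ j : ℕ,
        (R (Sum.inl ((((enum x).symm
            ⟨j % Fintype.card (occSet tri x), Nat.mod_lt _ hm⟩)).1, true)) < 2 ↔
          R (Sum.inl ((((enum x).symm
            ⟨0 % Fintype.card (occSet tri x), Nat.mod_lt _ hm⟩)).1, true)) < 2) := by
      intro j
      induction j with
      | zero => exact Iff.rfl
      | succ j ih =>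
        have h2 := hstep x ((enum x).symm
          ⟨j % Fintype.card (occSet tri x), Nat.mod_lt _ hm⟩)
        have h3 : nxtOcc tri enum x ((enum x).symm
              ⟨j % Fintype.card (occSet tri x), Nat.mod_lt _ hm⟩)
            = (enum x).symm ⟨(j + 1) % Fintype.card (occSet tri x), Nat.mod_lt _ hm⟩ := by
          unfold nxtOcc
          congr 1
          apply Fin.ext
          simp only [Equiv.apply_symm_apply]
          exact Nat.mod_add_mod j _ 1
        rw [h3] at h2
        exact h2.trans ih
    have key : ∀ r : occSet tri x,
        (R (Sum.inl (r.1, true)) < 2 ↔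
          R (Sum.inl ((((enum x).symm
            ⟨0 % Fintype.card (occSet tri x), Nat.mod_lt _ hm⟩)).1, true)) < 2) := by
      intro r
      have h3 := main (enum x r).1
      have h4 : (⟨(enum x r).1 % Fintype.card (occSet tri x), Nat.mod_lt _ hm⟩ :
          Fin (Fintype.card (occSet tri x))) = enum x r :=
        Fin.ext (Nat.mod_eq_of_lt (enum x r).2)
      rw [h4, Equiv.symm_apply_apply] at h3
      exact h3
    exact (key q).trans (key q').symm
  -- the coloring
  refine ⟨fun x => if h : Nonempty (occSet tri x) then
    decide (R (Sum.inl ((Classical.choice h).1, true)) < 2) else true, fun T => ?_⟩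
  have hcA : ∀ o : Fin N × Fin 3,
      ((if h : Nonempty (occSet tri (tri o.1 o.2)) then
        decide (R (Sum.inl ((Classical.choice h).1, true)) < 2) else true) = true) ↔
      R (Sum.inl (o, true)) < 2 := by
    intro o
    have hne : Nonempty (occSet tri (tri o.1 o.2)) := ⟨⟨o, rfl⟩⟩
    rw [dif_pos hne, decide_eq_true_eq]
    exact hconst _ (Classical.choice hne) ⟨o, rfl⟩
  constructor
  · -- some node is colored `true`
    by_contra hno
    push_neg at hno
    have hAi : ∀ i : Fin 3, ¬ (R (Sum.inl ((T, i), true)) < 2) :=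
      fun i h => hno i ((hcA (T, i)).mpr h)
    have hw : ∀ i : Fin 3, R (Sum.inr (Sum.inr ((T, i), false))) < 2 := by
      intro i
      have h2 := hNk (T, i)
      exact h2.1.mp (h2.2.mpr (hAi i))
    have c3 : cyc6 3 = (2, false) := by decide
    have c4 : cyc6 4 = (1, false) := by decide
    have c5 : cyc6 5 = (0, false) := by decide
    have s3 : (3 : Fin 6) - 1 = 2 := by decide
    have s4 : (4 : Fin 6) - 1 = 3 := by decide
    have s5 : (5 : Fin 6) - 1 = 4 := by decide
    have e3 := hTexp T 3
    rw [s3, c3] at e3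
    have e4 := hTexp T 4
    rw [s4, c4] at e4
    have e5 := hTexp T 5
    rw [s5, c5] at e5
    have k3 : R (Sum.inr (Sum.inl (T, 3)))
        = R (Sum.inr (Sum.inl (T, 2))) + R (Sum.inr (Sum.inr ((T, 2), false))) :=
      keyA (RTm (T, 2)) (RTm (T, 3)) (RC ((T, 2), false)) (hw 2) e3
    have k4 : R (Sum.inr (Sum.inl (T, 4)))
        = R (Sum.inr (Sum.inl (T, 3))) + R (Sum.inr (Sum.inr ((T, 1), false))) :=
      keyA (RTm (T, 3)) (RTm (T, 4)) (RC ((T, 1), false)) (hw 1) e4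
    have k5 : R (Sum.inr (Sum.inl (T, 5)))
        = R (Sum.inr (Sum.inl (T, 4))) + R (Sum.inr (Sum.inr ((T, 0), false))) :=
      keyA (RTm (T, 4)) (RTm (T, 5)) (RC ((T, 0), false)) (hw 0) e5
    have b2 := RTm (T, 2)
    have b5 := RTm (T, 5)
    simp only [Set.mem_Ioo] at b2 b5
    have w0 := (Sset_sub (RC ((T, (0 : Fin 3)), false))).1
    have w1 := (Sset_sub (RC ((T, (1 : Fin 3)), false))).1
    have w2 := (Sset_sub (RC ((T, (2 : Fin 3)), false))).1
    linarith [b2.1, b5.2]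
  · -- some node is colored `false`
    by_contra hno
    push_neg at hno
    have hAi : ∀ i : Fin 3, R (Sum.inl ((T, i), true)) < 2 := by
      intro i
      have hb := hno i
      have hb2 : (if h : Nonempty (occSet tri (tri (T, i).1 (T, i).2)) then
          decide (R (Sum.inl ((Classical.choice h).1, true)) < 2) else true) = true := by
        simpa using hb
      exact (hcA (T, i)).mp hb2
    have hw : ∀ i : Fin 3, R (Sum.inr (Sum.inr ((T, i), true))) < 2 :=
      fun i => (hPk (T, i)).1.mp (hAi i)
    have c0 : cyc6 0 = (0, true) := by decide
    have c1 : cyc6 1 = (1, true) := by decide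
    have c2 : cyc6 2 = (2, true) := by decide
    have s0 : (0 : Fin 6) - 1 = 5 := by decide
    have s1 : (1 : Fin 6) - 1 = 0 := by decide
    have s2 : (2 : Fin 6) - 1 = 1 := by decide
    have e0 := hTexp T 0
    rw [s0, c0] at e0
    have e1 := hTexp T 1
    rw [s1, c1] at e1
    have e2 := hTexp T 2
    rw [s2, c2] at e2
    have k0 : R (Sum.inr (Sum.inl (T, 0)))
        = R (Sum.inr (Sum.inl (T, 5))) + R (Sum.inr (Sum.inr ((T, 0), true))) :=
      keyA (RTm (T, 5)) (RTm (T, 0)) (RC ((T, 0), true)) (hw 0) e0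
    have k1 : R (Sum.inr (Sum.inl (T, 1)))
        = R (Sum.inr (Sum.inl (T, 0))) + R (Sum.inr (Sum.inr ((T, 1), true))) :=
      keyA (RTm (T, 0)) (RTm (T, 1)) (RC ((T, 1), true)) (hw 1) e1
    have k2 : R (Sum.inr (Sum.inl (T, 2)))
        = R (Sum.inr (Sum.inl (T, 1))) + R (Sum.inr (Sum.inr ((T, 2), true))) :=
      keyA (RTm (T, 1)) (RTm (T, 2)) (RC ((T, 2), true)) (hw 2) e2
    have b2 := RTm (T, 2)
    have b5 := RTm (T, 5)
    simp only [Set.mem_Ioo] at b2 b5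
    have w0 := (Sset_sub (RC ((T, (0 : Fin 3)), true))).1
    have w1 := (Sset_sub (RC ((T, (1 : Fin 3)), true))).1
    have w2 := (Sset_sub (RC ((T, (2 : Fin 3)), true))).1
    linarith [b2.2, b5.1]
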